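/- Let N : ℕ → ℤ → ℝ satisfy the 1D discrete total-population recursion. If N_j^0 ≤ Λ/μ for all j ∈ ℤ, then N_j^n ≤ Λ/μ for all n ≥ 0 and all j ∈ ℤ; i.e., the region {N ≤ Λ/μ} is invariant under the 1D NSFD scheme, unconditionally in the step sizes k > 0 and h > 0. -/

import Mathlib

/-- The region `{N ≤ Λ/μ}` is invariant under the 1D discrete
total-population recursion, unconditionally in the step sizes `k > 0` and `h > 0`. -/
theorem nsfd1d_total_population_invariant_region
    (Λ μ lam k φ h r : ℝ)
    (hΛ : 0 ≤ Λ) (hμ : 0 < μ) (hlam : 0 ≤ lam)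
    (hk : 0 < k) (hφ : 0 < φ) (hh : 0 < h) (hr : r = φ / h ^ 2)
    (N : ℕ → ℤ → ℝ)
    (hN : ∀ n j, (N (n + 1) j - N n j) / φ =
      lam * (N n (j + 1) - 2 * N (n + 1) j + N n (j - 1)) / h ^ 2 + Λ - μ * N (n + 1) j)
    (hN0 : ∀ j, N 0 j ≤ Λ / μ) :
    ∀ n j, N n j ≤ Λ / μ := by
  have hh2 : (0:ℝ) < h ^ 2 := by positivity
  have hrpos : 0 ≤ r := by rw [hr]; positivity
  intro n
  induction n with
  | zero => exact hN0
  | succ n ih =>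
    intro j
    have key := hN n j
    have hden : 0 < 1 + 2 * lam * r + φ * μ := by positivity
    have heq : N (n + 1) j * (1 + 2 * lam * r + φ * μ) =
        N n j + lam * r * (N n (j + 1) + N n (j - 1)) + φ * Λ := by
      rw [hr]
      field_simp at key ⊢
      linear_combination key
    have hb : N n j + lam * r * (N n (j + 1) + N n (j - 1)) + φ * Λ ≤
        (1 + 2 * lam * r + φ * μ) * (Λ / μ) := by
      have h1 := ih j
      have h2 := ih (j + 1)
      have h3 := ih (j - 1)
      have hφΛ : φ * Λ = φ * μ * (Λ / μ) := by field_simp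
      have hlr : 0 ≤ lam * r := mul_nonneg hlam hrpos
      nlinarith [mul_nonneg hlr (sub_nonneg.2 h2), mul_nonneg hlr (sub_nonneg.2 h3)]
    calc N (n + 1) j = (N n j + lam * r * (N n (j + 1) + N n (j - 1)) + φ * Λ) / (1 + 2 * lam * r + φ * μ) := by
          rw [← heq]; field_simp
      _ ≤ Λ / μ := by
          rw [div_le_iff₀ hden]
          linarith [hb]
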